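/- Let L be a finite lattice, Γ and Γ̃ sets of join-irreducible elements, Ψ and Ψ̃ the congruences they generate, and I the set of join-irreducibles contracted by Ψ. Then the congruence (Ψ ∨ Ψ̃)/Ψ on L/Ψ is generated by the join-irreducible elements {[j]_Ψ : j ∈ Γ̃ \ I}. -/

import Mathlib

section

variable {L : Type*} [Lattice L]

/-- A lattice congruence: an equivalence relation compatible with meet and join. -/
def IsLatCong (Θ : L → L → Prop) : Prop :=
  Equivalence Θ ∧ ∀ x₁ y₁ x₂ y₂ : L, Θ x₁ y₁ → Θ x₂ y₂ →
    Θ (x₁ ⊓ x₂) (y₁ ⊓ y₂) ∧ Θ (x₁ ⊔ x₂) (y₁ ⊔ y₂)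

/-- `j` is join-irreducible: it covers exactly one element. -/
def JoinIrred (j : L) : Prop := ∃! a : L, a ⋖ j

/-- `Θ` contracts the join-irreducible `j`: `j ≡ j₊` for its unique lower cover. -/
def Contracts (Θ : L → L → Prop) (j : L) : Prop := ∀ a : L, a ⋖ j → Θ j a

/-- The finest lattice congruence contracting every join-irreducible in `G`. -/
def CongGen (G : Set L) : L → L → Prop :=
  fun x y => ∀ Θ : L → L → Prop, IsLatCong Θ → (∀ j ∈ G, Contracts Θ j) → Θ x y

/-- The join `Ψ ∨ Ψ'` in `Con(L)`: the finest congruence containing both. -/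
def CongJoin2 (Ψ Ψ' : L → L → Prop) : L → L → Prop :=
  fun x y => ∀ Θ : L → L → Prop, IsLatCong Θ →
    (∀ a b : L, Ψ a b → Θ a b) → (∀ a b : L, Ψ' a b → Θ a b) → Θ x y

/-- The order on the quotient `L/Ψ`: `q ≤ q'` iff some representatives compare. -/
def qle (Ψ : L → L → Prop) (q q' : Quot Ψ) : Prop :=
  ∃ x y : L, Quot.mk Ψ x = q ∧ Quot.mk Ψ y = q' ∧ x ≤ y

/-- Strict order on the quotient. -/
def qlt (Ψ : L → L → Prop) (q q' : Quot Ψ) : Prop := qle Ψ q q' ∧ ¬ qle Ψ q' q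

/-- Cover relation on the quotient. -/
def qcov (Ψ : L → L → Prop) (q q' : Quot Ψ) : Prop :=
  qlt Ψ q q' ∧ ∀ z : Quot Ψ, qlt Ψ q z → qlt Ψ z q' → False

/-- Join-irreducibility in the quotient: exactly one lower cover. -/
def qJoinIrred (Ψ : L → L → Prop) (q : Quot Ψ) : Prop := ∃! p : Quot Ψ, qcov Ψ p q

/-- A lattice congruence on the quotient `L/Ψ` (whose meet and join are computed
on representatives). -/
def qIsLatCong (Ψ : L → L → Prop) (R : Quot Ψ → Quot Ψ → Prop) : Prop :=
  Equivalence R ∧ ∀ x₁ y₁ x₂ y₂ : L,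
    R (Quot.mk Ψ x₁) (Quot.mk Ψ y₁) → R (Quot.mk Ψ x₂) (Quot.mk Ψ y₂) →
    R (Quot.mk Ψ (x₁ ⊓ x₂)) (Quot.mk Ψ (y₁ ⊓ y₂)) ∧
    R (Quot.mk Ψ (x₁ ⊔ x₂)) (Quot.mk Ψ (y₁ ⊔ y₂))

/-- `R` contracts the join-irreducible `j` of the quotient. -/
def qContracts (Ψ : L → L → Prop) (R : Quot Ψ → Quot Ψ → Prop) (j : Quot Ψ) : Prop :=
  ∀ a : Quot Ψ, qcov Ψ a j → R j a

/-- The finest congruence on the quotient contracting every join-irreducible in `G`. -/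
def qCongGen (Ψ : L → L → Prop) (G : Set (Quot Ψ)) : Quot Ψ → Quot Ψ → Prop :=
  fun q q' => ∀ R : Quot Ψ → Quot Ψ → Prop, qIsLatCong Ψ R →
    (∀ j ∈ G, qContracts Ψ R j) → R q q'

end


section Aux

variable {L : Type*} [Lattice L]

theorem congGen_isLatCong (G : Set L) : IsLatCong (CongGen G) := by
  refine ⟨⟨fun x Θ hΘ _ => hΘ.1.refl x,
    fun h Θ hΘ hG => hΘ.1.symm (h Θ hΘ hG),
    fun h1 h2 Θ hΘ hG => hΘ.1.trans (h1 Θ hΘ hG) (h2 Θ hΘ hG)⟩, ?_⟩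
  intro x₁ y₁ x₂ y₂ h1 h2
  exact ⟨fun Θ hΘ hG => (hΘ.2 _ _ _ _ (h1 Θ hΘ hG) (h2 Θ hΘ hG)).1,
    fun Θ hΘ hG => (hΘ.2 _ _ _ _ (h1 Θ hΘ hG) (h2 Θ hΘ hG)).2⟩

theorem congGen_contracts {G : Set L} {j : L} (hj : j ∈ G) : Contracts (CongGen G) j :=
  fun a ha Θ hΘ hG => hG j hj a ha

theorem congJoin2_isLatCong (Ψ Ψ' : L → L → Prop) : IsLatCong (CongJoin2 Ψ Ψ') := by
  refine ⟨⟨fun x Θ hΘ _ _ => hΘ.1.refl x,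
    fun h Θ hΘ h1 h2 => hΘ.1.symm (h Θ hΘ h1 h2),
    fun ha hb Θ hΘ h1 h2 => hΘ.1.trans (ha Θ hΘ h1 h2) (hb Θ hΘ h1 h2)⟩, ?_⟩
  intro x₁ y₁ x₂ y₂ h1 h2
  exact ⟨fun Θ hΘ ha hb => (hΘ.2 _ _ _ _ (h1 Θ hΘ ha hb) (h2 Θ hΘ ha hb)).1,
    fun Θ hΘ ha hb => (hΘ.2 _ _ _ _ (h1 Θ hΘ ha hb) (h2 Θ hΘ ha hb)).2⟩

theorem congJoin2_left {Ψ Ψ' : L → L → Prop} {a b : L} (h : Ψ a b) : CongJoin2 Ψ Ψ' a b :=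
  fun _ _ h1 _ => h1 a b h

theorem congJoin2_right {Ψ Ψ' : L → L → Prop} {a b : L} (h : Ψ' a b) : CongJoin2 Ψ Ψ' a b :=
  fun _ _ _ h2 => h2 a b h

theorem mk_eq_iff {Ψ : L → L → Prop} (hΨ : IsLatCong Ψ) {a b : L} :
    Quot.mk Ψ a = Quot.mk Ψ b ↔ Ψ a b :=
  Quot.eq.trans hΨ.1.eqvGen_iff

theorem qle_mk_iff {Ψ : L → L → Prop} (hΨ : IsLatCong Ψ) {x y : L} :
    qle Ψ (Quot.mk Ψ x) (Quot.mk Ψ y) ↔ Ψ x (x ⊓ y) := by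
  constructor
  · rintro ⟨x', y', hx, hy, hle⟩
    have hx' : Ψ x' x := (mk_eq_iff hΨ).1 hx
    have hy' : Ψ y' y := (mk_eq_iff hΨ).1 hy
    have h2 : Ψ (x' ⊓ y') (x ⊓ y) := (hΨ.2 _ _ _ _ hx' hy').1
    rw [inf_eq_left.2 hle] at h2
    exact hΨ.1.trans (hΨ.1.symm hx') h2
  · intro h
    exact ⟨x ⊓ y, y, ((mk_eq_iff hΨ).2 h).symm, rfl, inf_le_right⟩

theorem qle_refl (Ψ : L → L → Prop) (q : Quot Ψ) : qle Ψ q q := by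
  induction q using Quot.ind with
  | _ x => exact ⟨x, x, rfl, rfl, le_refl x⟩

theorem qle_antisymm {Ψ : L → L → Prop} (hΨ : IsLatCong Ψ) {q q' : Quot Ψ}
    (h1 : qle Ψ q q') (h2 : qle Ψ q' q) : q = q' := by
  induction q using Quot.ind with
  | _ x =>
    induction q' using Quot.ind with
    | _ y =>
      have hx : Ψ x (x ⊓ y) := (qle_mk_iff hΨ).1 h1
      have hy : Ψ y (y ⊓ x) := (qle_mk_iff hΨ).1 h2
      rw [inf_comm] at hy
      exact (mk_eq_iff hΨ).2 (hΨ.1.trans hx (hΨ.1.symm hy))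

theorem exists_covBy_of_lt [Fintype L] {x j : L} (h : x < j) : ∃ m, x ≤ m ∧ m ⋖ j := by
  obtain ⟨m, hm, hmax⟩ := (Set.toFinite {y : L | x ≤ y ∧ y < j}).exists_maximal
    ⟨x, le_refl x, h⟩
  refine ⟨m, hm.1, hm.2, fun c hc hcj => hc.not_ge (hmax ⟨hm.1.trans hc.le, hcj⟩ hc.le)⟩

/-- Key lemma: if `j` is join-irreducible with lower cover `c` and the congruence `Ψ`
does not contract `j`, then `[c]` is the unique lower cover of `[j]` in `L/Ψ`. -/
theorem key_cov [Fintype L] {Ψ : L → L → Prop} (hΨ : IsLatCong Ψ) {j c : L}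
    (hj : JoinIrred j) (hc : c ⋖ j) (hn : ¬ Ψ j c) :
    qcov Ψ (Quot.mk Ψ c) (Quot.mk Ψ j) ∧
      ∀ p : Quot Ψ, qcov Ψ p (Quot.mk Ψ j) → p = Quot.mk Ψ c := by
  obtain ⟨a₀, _, hu⟩ := hj
  have key1 : qlt Ψ (Quot.mk Ψ c) (Quot.mk Ψ j) := by
    refine ⟨⟨c, j, rfl, rfl, hc.1.le⟩, fun h => ?_⟩
    have := (qle_mk_iff hΨ).1 h
    rw [inf_eq_right.2 hc.1.le] at this
    exact hn this
  have key2 : ∀ x : L, qlt Ψ (Quot.mk Ψ x) (Quot.mk Ψ j) →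
      qle Ψ (Quot.mk Ψ x) (Quot.mk Ψ c) := by
    intro x hlt
    have h1 : Ψ x (x ⊓ j) := (qle_mk_iff hΨ).1 hlt.1
    rcases eq_or_lt_of_le (inf_le_right : x ⊓ j ≤ j) with heq | hlt'
    · exfalso
      have hxj : Ψ x j := heq ▸ h1
      exact hlt.2 ⟨j, j, rfl, ((mk_eq_iff hΨ).2 hxj).symm, le_refl j⟩
    · obtain ⟨m, hxm, hmj⟩ := exists_covBy_of_lt hlt'
      have hmc : m = c := (hu m hmj).trans (hu c hc).symm
      exact ⟨x ⊓ j, c, ((mk_eq_iff hΨ).2 h1).symm, rfl, hmc ▸ hxm⟩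
  have hcov : qcov Ψ (Quot.mk Ψ c) (Quot.mk Ψ j) := by
    refine ⟨key1, fun z hz1 hz2 => ?_⟩
    induction z using Quot.ind with
    | _ z => exact hz1.2 (key2 z hz2)
  refine ⟨hcov, fun p hp => ?_⟩
  induction p using Quot.ind with
  | _ x =>
    have hple := key2 x hp.1
    by_cases h : qle Ψ (Quot.mk Ψ c) (Quot.mk Ψ x)
    · exact qle_antisymm hΨ hple h
    · exact absurd (hp.2 (Quot.mk Ψ c) ⟨hple, h⟩ key1) not_false

theorem not_psi_of_not_contracts {Ψ : L → L → Prop} {j c : L}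
    (hj : JoinIrred j) (hc : c ⋖ j) (hnc : ¬ Contracts Ψ j) : ¬ Ψ j c := by
  intro h
  apply hnc
  intro a ha
  obtain ⟨a₀, _, hu⟩ := hj
  rwa [(hu a ha).trans (hu c hc).symm]

end Aux

/-- Let `L` be a finite lattice, `Γ` and `Γ̃` sets of join-irreducible elements,
`Ψ = CongGen Γ` and `Ψ̃ = CongGen Γ̃` the congruences they generate, and `I` the set of
join-irreducibles contracted by `Ψ`.  Then `{[j]_Ψ : j ∈ Γ̃ \ I}` is a set of
join-irreducible elements of `L/Ψ`, and it generates the congruence `(Ψ ∨ Ψ̃)/Ψ`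
on `L/Ψ`. -/
theorem stmt_17 {L : Type*} [Lattice L] [Fintype L]
    (Γ Γt : Set L) (hΓ : ∀ j ∈ Γ, JoinIrred j) (hΓt : ∀ j ∈ Γt, JoinIrred j) :
    (∀ j ∈ Γt, ¬ Contracts (CongGen Γ) j →
      qJoinIrred (CongGen Γ) (Quot.mk (CongGen Γ) j)) ∧
    (∀ q q' : Quot (CongGen Γ),
      qCongGen (CongGen Γ)
          ((fun j : L => Quot.mk (CongGen Γ) j) ''
            {j ∈ Γt | ¬ Contracts (CongGen Γ) j}) q q'
        ↔ ∃ x y : L, Quot.mk (CongGen Γ) x = q ∧ Quot.mk (CongGen Γ) y = q' ∧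
            CongJoin2 (CongGen Γ) (CongGen Γt) x y) := by
  classical
  set Ψ : L → L → Prop := CongGen Γ with hΨdef
  have hΨ : IsLatCong Ψ := congGen_isLatCong Γ
  set Ψt : L → L → Prop := CongGen Γt with hΨtdef
  have hΨt : IsLatCong Ψt := congGen_isLatCong Γt
  have hΦ : IsLatCong (CongJoin2 Ψ Ψt) := congJoin2_isLatCong Ψ Ψt
  constructor
  · -- Part 1
    intro j hjt hnc
    obtain ⟨c, hc, _⟩ := hΓt j hjt
    have hn : ¬ Ψ j c := not_psi_of_not_contracts (hΓt j hjt) hc hnc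
    obtain ⟨hcov, huniq⟩ := key_cov hΨ (hΓt j hjt) hc hn
    exact ⟨Quot.mk Ψ c, hcov, huniq⟩
  · -- Part 2
    intro q q'
    constructor
    · intro h
      set R₀ : Quot Ψ → Quot Ψ → Prop :=
        fun a b => ∃ x y : L, Quot.mk Ψ x = a ∧ Quot.mk Ψ y = b ∧ CongJoin2 Ψ Ψt x y
        with hR₀def
      have hΨΦ : ∀ a b : L, Ψ a b → CongJoin2 Ψ Ψt a b := fun a b hab => congJoin2_left hab
      have hcong : qIsLatCong Ψ R₀ := by
        constructor
        · refine ⟨?_, ?_, ?_⟩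
          · intro a
            induction a using Quot.ind with
            | _ x => exact ⟨x, x, rfl, rfl, hΦ.1.refl x⟩
          · rintro a b ⟨x, y, hx, hy, hxy⟩
            exact ⟨y, x, hy, hx, hΦ.1.symm hxy⟩
          · rintro a b c ⟨x, y, hx, hy, hxy⟩ ⟨y', z, hy', hz, hyz⟩
            have : Ψ y y' := (mk_eq_iff hΨ).1 (hy.trans hy'.symm)
            exact ⟨x, z, hx, hz, hΦ.1.trans hxy (hΦ.1.trans (hΨΦ _ _ this) hyz)⟩
        · rintro x₁ y₁ x₂ y₂ ⟨a, b, ha, hb, hab⟩ ⟨a', b', ha', hb', hab'⟩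
          have h1 : CongJoin2 Ψ Ψt x₁ y₁ :=
            hΦ.1.trans (hΦ.1.symm (hΨΦ _ _ ((mk_eq_iff hΨ).1 ha)))
              (hΦ.1.trans hab (hΨΦ _ _ ((mk_eq_iff hΨ).1 hb)))
          have h2 : CongJoin2 Ψ Ψt x₂ y₂ :=
            hΦ.1.trans (hΦ.1.symm (hΨΦ _ _ ((mk_eq_iff hΨ).1 ha')))
              (hΦ.1.trans hab' (hΨΦ _ _ ((mk_eq_iff hΨ).1 hb')))
          exact ⟨⟨_, _, rfl, rfl, (hΦ.2 _ _ _ _ h1 h2).1⟩,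
            ⟨_, _, rfl, rfl, (hΦ.2 _ _ _ _ h1 h2).2⟩⟩
      have hcontr : ∀ g ∈ (fun j : L => Quot.mk Ψ j) '' {j ∈ Γt | ¬ Contracts Ψ j},
          qContracts Ψ R₀ g := by
        rintro g ⟨j, ⟨hjt, hnc⟩, rfl⟩ a ha
        obtain ⟨c, hc, _⟩ := hΓt j hjt
        have hn : ¬ Ψ j c := not_psi_of_not_contracts (hΓt j hjt) hc hnc
        obtain ⟨_, huniq⟩ := key_cov hΨ (hΓt j hjt) hc hn
        rw [huniq a ha]
        exact ⟨j, c, rfl, rfl, congJoin2_right (congGen_contracts hjt c hc)⟩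
      exact h R₀ hcong hcontr
    · rintro ⟨x, y, rfl, rfl, hxy⟩
      intro R hR hcon
      set Θ : L → L → Prop := fun a b => R (Quot.mk Ψ a) (Quot.mk Ψ b) with hΘdef
      have hΘcong : IsLatCong Θ := by
        refine ⟨⟨fun a => hR.1.refl _, fun h => hR.1.symm h, fun h1 h2 => hR.1.trans h1 h2⟩, ?_⟩
        intro x₁ y₁ x₂ y₂ h1 h2
        exact hR.2 x₁ y₁ x₂ y₂ h1 h2
      have hΘΨ : ∀ a b : L, Ψ a b → Θ a b := by
        intro a b hab
        show R (Quot.mk Ψ a) (Quot.mk Ψ b)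
        rw [(mk_eq_iff hΨ).2 hab]
        exact hR.1.refl _
      have hΘΨt : ∀ a b : L, Ψt a b → Θ a b := by
        intro a b hab
        apply hab Θ hΘcong
        intro j hjt c hcj
        by_cases hco : Contracts Ψ j
        · exact hΘΨ j c (hco c hcj)
        · have hn : ¬ Ψ j c := not_psi_of_not_contracts (hΓt j hjt) hcj hco
          obtain ⟨hcov, _⟩ := key_cov hΨ (hΓt j hjt) hcj hn
          exact hcon (Quot.mk Ψ j) ⟨j, ⟨hjt, hco⟩, rfl⟩ (Quot.mk Ψ c) hcov
      exact hxy Θ hΘcong hΘΨ hΘΨt
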